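/- Let A be an n×n Hermitian matrix with orthonormal eigenbasis |z₁⟩,…,|zₙ⟩ and eigenvalues λ₁,…,λₙ, and suppose that for two standard basis vectors |a⟩, |b⟩ and every ε > 0 there is a time t with |⟨b| exp(−itA) |a⟩| ≥ 1 − ε. Then |⟨a|zₖ⟩| = |⟨b|zₖ⟩| for every k. -/

import Mathlib

open Matrix BigOperators

theorem pgst_flat (n : ℕ) (A : Matrix (Fin n) (Fin n) ℂ) (hA : A.IsHermitian)
    (z : Fin n → (Fin n → ℂ)) (lam : Fin n → ℝ)
    (horth : ∀ k l, ∑ i, (starRingEnd ℂ) (z k i) * z l i = if k = l then 1 else 0)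
    (heig : ∀ k, A.mulVec (z k) = ((lam k : ℂ)) • z k)
    (a b : Fin n)
    (hpgst : ∀ ε : ℝ, 0 < ε → ∃ t : ℝ,
      1 - ε ≤ ‖(NormedSpace.exp ((-(Complex.I * (t : ℂ))) • A)) b a‖) :
    ∀ k, ‖z k a‖ = ‖z k b‖ := by
  classical
  set U : Matrix (Fin n) (Fin n) ℂ := Matrix.of (fun i k => z k i) with hUdef
  have hUHU : Uᴴ * U = 1 := by
    ext k l
    simpa [Matrix.mul_apply, Matrix.conjTranspose_apply, hUdef, Matrix.one_apply]
      using horth k l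
  have hUUH : U * Uᴴ = 1 := mul_eq_one_comm.mp hUHU
  have hinv : U⁻¹ = Uᴴ := Matrix.inv_eq_right_inv hUUH
  have hUnit : IsUnit U := by
    have := invertibleOfRightInverse (h := hUUH)
    exact isUnit_of_invertible U
  have hAU : A * U = U * Matrix.diagonal (fun k => (lam k : ℂ)) := by
    ext i k
    have h := congrFun (heig k) i
    simp only [Matrix.mulVec, dotProduct, Pi.smul_apply, smul_eq_mul] at h
    rw [Matrix.mul_diagonal]
    simp only [Matrix.mul_apply, hUdef, Matrix.of_apply]
    rw [h]; ring
  have hAeq : A = U * Matrix.diagonal (fun k => (lam k : ℂ)) * Uᴴ := by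
    calc A = A * (U * Uᴴ) := by rw [hUUH, mul_one]
    _ = (A * U) * Uᴴ := by rw [mul_assoc]
    _ = U * Matrix.diagonal (fun k => (lam k : ℂ)) * Uᴴ := by rw [hAU]
  -- entry formula for exp
  have hentry : ∀ t : ℝ,
      (NormedSpace.exp ((-(Complex.I * (t : ℂ))) • A)) b a
        = ∑ k, Complex.exp (-(Complex.I * t * lam k)) * (z k b * (starRingEnd ℂ) (z k a)) := by
    intro t
    have hdiag : Matrix.diagonal (fun k => -(Complex.I * t * lam k))
        = (-(Complex.I * (t : ℂ))) • Matrix.diagonal (fun k => (lam k : ℂ)) := by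
      ext i j
      by_cases hij : i = j <;>
        simp [Matrix.diagonal_apply, hij, mul_assoc]
    have hsmul : (-(Complex.I * (t : ℂ))) • A
        = U * Matrix.diagonal (fun k => -(Complex.I * t * lam k)) * U⁻¹ := by
      rw [hinv, hAeq, hdiag, Matrix.mul_smul, Matrix.smul_mul]
    rw [hsmul, Matrix.exp_conj _ _ hUnit, Matrix.exp_diagonal, hinv]
    rw [Pi.exp_def]
    rw [Matrix.mul_apply]
    simp_rw [Matrix.mul_diagonal]
    simp only [Matrix.conjTranspose_apply, hUdef, Matrix.of_apply, starRingEnd_apply]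
    refine Finset.sum_congr rfl fun k _ => ?_
    rw [← Complex.exp_eq_exp_ℂ]
    ring
  -- the bound
  set S : ℝ := ∑ k, ‖z k a‖ * ‖z k b‖ with hS
  have hbound : ∀ t : ℝ,
      ‖(NormedSpace.exp ((-(Complex.I * (t : ℂ))) • A)) b a‖ ≤ S := by
    intro t
    rw [hentry t]
    refine (norm_sum_le _ _).trans ?_
    rw [hS]
    refine Finset.sum_le_sum fun k _ => ?_
    have habs : ‖Complex.exp (-(Complex.I * t * lam k))‖ = 1 := by
      rw [Complex.norm_exp]
      have : (-(Complex.I * t * lam k)).re = 0 := by simp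
      rw [this, Real.exp_zero]
    rw [norm_mul, habs, one_mul, norm_mul, Complex.norm_conj]
    exact le_of_eq (mul_comm _ _)
  have hS1 : 1 ≤ S := by
    refine le_of_forall_pos_le_add fun ε hε => ?_
    obtain ⟨t, ht⟩ := hpgst ε hε
    linarith [hbound t]
  -- column norms
  have hnorm : ∀ c : Fin n, ∑ k, ‖z k c‖^2 = 1 := by
    intro c
    have h := congrFun (congrFun hUUH c) c
    simp only [Matrix.mul_apply, Matrix.conjTranspose_apply, hUdef, Matrix.of_apply,
      Matrix.one_apply_eq] at h
    have h2 : (((∑ k, ‖z k c‖^2 : ℝ)) : ℂ) = 1 := by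
      rw [Complex.ofReal_sum]
      rw [← h]
      refine Finset.sum_congr rfl fun k _ => ?_
      rw [Complex.sq_norm]
      rw [← Complex.mul_conj]
      rfl
    exact_mod_cast h2
  have hkey : ∑ k, (‖z k a‖ - ‖z k b‖)^2 ≤ 0 := by
    have hexp : ∑ k, (‖z k a‖ - ‖z k b‖)^2
        = (∑ k, ‖z k a‖^2) + (∑ k, ‖z k b‖^2) - 2 * S := by
      rw [hS, Finset.mul_sum, ← Finset.sum_add_distrib, ← Finset.sum_sub_distrib]
      exact Finset.sum_congr rfl fun k _ => by ring
    rw [hexp, hnorm a, hnorm b]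
    linarith
  have hzero : ∀ k ∈ Finset.univ, (‖z k a‖ - ‖z k b‖)^2 = 0 := by
    rw [← Finset.sum_eq_zero_iff_of_nonneg (fun k _ => sq_nonneg _)]
    exact le_antisymm hkey (Finset.sum_nonneg fun k _ => sq_nonneg _)
  intro k
  have := hzero k (Finset.mem_univ k)
  have := pow_eq_zero_iff (n := 2) (by norm_num) |>.mp this
  linarith [this]
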